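/- If W is an infinite right-infinite word over a finite alphabet such that for some natural number n the number of distinct factors of W of length n is at most n, then W is eventually periodic. -/
import Mathlib

def factorAt {A : Type*} (W : ℕ → A) (i n : ℕ) : List A :=
  (List.range n).map (fun j => W (i + j))

def IsFactorOf {A : Type*} (u : List A) (W : ℕ → A) : Prop :=
  ∃ i, u = factorAt W i u.length

section aux
variable {A : Type*} [Fintype A] (W : ℕ → A)

lemma factorAt_length (i n : ℕ) : (factorAt W i n).length = n := by
  simp [factorAt]

lemma factorAt_mem (i n : ℕ) :
    factorAt W i n ∈ {u : List A | IsFactorOf u W ∧ u.length = n} :=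
  ⟨⟨i, by rw [factorAt_length]⟩, factorAt_length W i n⟩

lemma factorAt_eq_iff (i j n : ℕ) :
    factorAt W i n = factorAt W j n ↔ ∀ r < n, W (i + r) = W (j + r) := by
  unfold factorAt
  rw [List.map_eq_map_iff]
  simp only [List.mem_range]

lemma factorAt_take (i n : ℕ) :
    (factorAt W i (n + 1)).take n = factorAt W i n := by
  unfold factorAt
  rw [← List.map_take, List.take_range, Nat.min_eq_left (by omega)]

lemma F_finite (n : ℕ) : {u : List A | IsFactorOf u W ∧ u.length = n}.Finite :=
  (List.finite_length_eq A n).subset (fun u hu => hu.2)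

lemma F_mono (n : ℕ) :
    Set.ncard {u : List A | IsFactorOf u W ∧ u.length = n} ≤
    Set.ncard {u : List A | IsFactorOf u W ∧ u.length = n + 1} := by
  have himg : {u : List A | IsFactorOf u W ∧ u.length = n} ⊆
      (fun u : List A => u.take n) '' {u : List A | IsFactorOf u W ∧ u.length = n + 1} := by
    rintro u ⟨⟨i, hi⟩, hlen⟩
    exact ⟨factorAt W i (n+1), factorAt_mem W i (n+1), by
      show (factorAt W i (n+1)).take n = u
      rw [factorAt_take, hi, hlen]⟩
  calc Set.ncard {u : List A | IsFactorOf u W ∧ u.length = n}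
      ≤ Set.ncard ((fun u : List A => u.take n) ''
          {u : List A | IsFactorOf u W ∧ u.length = n + 1}) :=
        Set.ncard_le_ncard himg ((F_finite W (n+1)).image _)
    _ ≤ _ := Set.ncard_image_le (F_finite W (n+1))

lemma F_zero : Set.ncard {u : List A | IsFactorOf u W ∧ u.length = 0} = 1 := by
  have : {u : List A | IsFactorOf u W ∧ u.length = 0} = {[]} := by
    ext u
    simp only [Set.mem_setOf_eq, Set.mem_singleton_iff, List.length_eq_zero_iff]
    constructor
    · rintro ⟨_, h⟩; exact h
    · rintro rfl; exact ⟨⟨0, rfl⟩, rfl⟩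
  rw [this, Set.ncard_singleton]

end aux

theorem stmt0 {A : Type*} [Fintype A] (W : ℕ → A)
    (h : ∃ n : ℕ, Set.ncard {u : List A | IsFactorOf u W ∧ u.length = n} ≤ n) :
    ∃ N k : ℕ, 0 < k ∧ ∀ i ≥ N, W (i + k) = W i := by
  classical
  set p : ℕ → ℕ := fun n => Set.ncard {u : List A | IsFactorOf u W ∧ u.length = n} with hp
  obtain ⟨n, hn⟩ := h
  -- find m with p (m+1) = p m
  have key : ∃ m, p (m + 1) = p m := by
    by_contra hc
    push_neg at hc
    have hstrict : ∀ m, p m < p (m + 1) := fun m =>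
      lt_of_le_of_ne (F_mono W m) (Ne.symm (hc m))
    have hge : ∀ m, m + 1 ≤ p m := by
      intro m
      induction m with
      | zero => simp [hp, F_zero]
      | succ k ih => exact lt_of_le_of_lt ih (hstrict k)
    exact absurd (le_trans (hge n) hn) (by omega)
  obtain ⟨m, hm⟩ := key
  -- unique extension: equal length-m factors give equal next letter
  have ext_unique : ∀ i j, (∀ r < m, W (i + r) = W (j + r)) → W (i + m) = W (j + m) := by
    intro i j hij
    have himg : (fun u : List A => u.take m) ''
        {u : List A | IsFactorOf u W ∧ u.length = m + 1} =
        {u : List A | IsFactorOf u W ∧ u.length = m} := by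
      apply Set.Subset.antisymm
      · rintro _ ⟨u, ⟨⟨a, ha⟩, hlen⟩, rfl⟩
        rw [hlen] at ha
        subst ha
        show (factorAt W a (m+1)).take m ∈ _
        rw [factorAt_take]
        exact factorAt_mem W a m
      · rintro u ⟨⟨a, ha⟩, hlen⟩
        exact ⟨factorAt W a (m+1), factorAt_mem W a (m+1), by
          show (factorAt W a (m+1)).take m = u
          rw [factorAt_take, ha, hlen]⟩
    have hinj : Set.InjOn (fun u : List A => u.take m)
        {u : List A | IsFactorOf u W ∧ u.length = m + 1} := by
      apply Set.injOn_of_ncard_image_eq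
      · rw [himg]; exact hm.symm
      · exact F_finite W (m+1)
    have h1 : factorAt W i (m+1) = factorAt W j (m+1) := by
      apply hinj (factorAt_mem W i (m+1)) (factorAt_mem W j (m+1))
      simp only [factorAt_take]
      exact (factorAt_eq_iff W i j m).mpr hij
    have := (factorAt_eq_iff W i j (m+1)).mp h1 m (by omega)
    exact this
  -- pigeonhole on length-m factors
  obtain ⟨a, b, hab, heq⟩ := Finite.exists_ne_map_eq_of_infinite
    (fun i : ℕ => (fun r : Fin m => W (i + r)))
  wlog hlt : a < b generalizing a b
  · exact this b a hab.symm heq.symm (by omega)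
  have heq' : ∀ r < m, W (a + r) = W (b + r) := by
    intro r hr
    exact congrFun heq ⟨r, hr⟩
  -- propagate
  have prop : ∀ t, ∀ r < m, W (a + t + r) = W (b + t + r) := by
    intro t
    induction t with
    | zero => simpa using heq'
    | succ k ih =>
      intro r hr
      have h2 : W (a + k + (r + 1)) = W (b + k + (r + 1)) := by
        rcases Nat.lt_or_ge (r + 1) m with h' | h'
        · exact ih (r + 1) h'
        · have : r + 1 = m := by omega
          rw [this]
          exact ext_unique (a + k) (b + k) ih
      have e1 : a + (k + 1) + r = a + k + (r + 1) := by omega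
      have e2 : b + (k + 1) + r = b + k + (r + 1) := by omega
      rw [e1, e2]; exact h2
  have final : ∀ t, W (a + m + t) = W (b + m + t) := by
    intro t
    have := ext_unique (a + t) (b + t) (prop t)
    have e1 : a + m + t = a + t + m := by omega
    have e2 : b + m + t = b + t + m := by omega
    rw [e1, e2]; exact this
  refine ⟨a + m, b - a, by omega, ?_⟩
  intro i hi
  have ht : i = a + m + (i - (a + m)) := by omega
  have := final (i - (a + m))
  have e : i + (b - a) = b + m + (i - (a + m)) := by omega
  rw [e, ← this, ← ht]
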